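/- The strict asymptotic density with respect to the sup-norm of the set of even visible points in ℤ² — points (x,y) with gcd(x,y) = 1 and |x| + |y| even — equals 1/(3ζ(2)) = 2/π². -/

import Mathlib

open Filter ArithmeticFunction Real Finset
open scoped ArithmeticFunction.Moebius ArithmeticFunction.zeta



noncomputable def Fm (d : ℕ) : ℝ := (μ d : ℝ) / (d:ℝ)^2

lemma Fm_bound (d : ℕ) : ‖Fm d‖ ≤ 1 / (d:ℝ)^2 := by
  rcases eq_or_ne d 0 with rfl | hd
  · simp [Fm]
  · have hd' : (0:ℝ) < (d:ℝ)^2 := by positivity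
    rw [Fm, norm_div, Real.norm_eq_abs, ← Int.cast_abs, norm_pow, Real.norm_natCast]
    gcongr
    exact_mod_cast abs_moebius_le_one

lemma summable_Fm : Summable Fm :=
  ((Real.summable_one_div_nat_pow (p := 2)).mpr one_lt_two).of_norm_bounded Fm_bound

lemma tsum_Fm : ∑' d, Fm d = 6 / π ^ 2 := by
  have h := LSeries_zeta_mul_Lseries_moebius (s := 2) (by norm_num)
  have hz : LSeries (fun n => ((ζ n : ℕ) : ℂ)) 2 = (π:ℂ)^2/6 := by
    rw [LSeries_zeta_eq_riemannZeta (by norm_num), riemannZeta_two]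
  have hmu : LSeries (fun n => ((μ n : ℤ) : ℂ)) 2 = ((∑' d, Fm d : ℝ) : ℂ) := by
    rw [Complex.ofReal_tsum]
    apply tsum_congr
    intro n
    rcases eq_or_ne n 0 with rfl | hn
    · simp [LSeries.term, Fm]
    · rw [LSeries.term_of_ne_zero hn, Fm,
        show (2:ℂ) = ((2:ℕ):ℂ) by norm_num, Complex.cpow_natCast]
      push_cast
      ring
  rw [hz, hmu] at h
  have hpi2 : ((π:ℂ))^2 ≠ 0 := pow_ne_zero _ (by exact_mod_cast Real.pi_ne_zero)
  have : ((∑' d, Fm d : ℝ) : ℂ) = 6 / (π:ℂ)^2 := by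
    rw [eq_div_iff hpi2]
    field_simp at h
    linear_combination h
  exact_mod_cast this

noncomputable def Gm (d : ℕ) : ℝ := if Odd d then Fm d else 0

lemma Gm_bound (d : ℕ) : ‖Gm d‖ ≤ ‖Fm d‖ := by
  rw [Gm]; split <;> simp

lemma summable_Gm : Summable Gm := summable_Fm.norm.of_norm_bounded Gm_bound

lemma Fm_two_mul (k : ℕ) : Fm (2 * k) = -(1/4) * Gm k := by
  rcases Nat.even_or_odd k with hk | hk
  · have h2 : μ (2 * k) = 0 := by
      apply moebius_eq_zero_of_not_squarefree
      intro hsq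
      obtain ⟨m, rfl⟩ := hk
      have := hsq 2 (by ring_nf; exact ⟨m, by ring⟩)
      norm_num at this
    rw [Gm, if_neg (by simpa [Nat.odd_iff, Nat.even_iff] using hk), Fm, h2]
    simp
  · have hco : Nat.Coprime 2 k := Nat.coprime_two_left.mpr hk
    have h2 : μ (2 * k) = μ 2 * μ k := isMultiplicative_moebius.map_mul_of_coprime hco
    have hμ2 : μ 2 = -1 := by
      rw [moebius_apply_prime Nat.prime_two]
    rw [Gm, if_pos hk, Fm, Fm, h2, hμ2]
    push_cast
    ring

lemma tsum_Gm : ∑' d, Gm d = 8 / π ^ 2 := by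
  have hFG : (fun k => Fm (2 * k)) = fun k => -(1/4) * Gm k := funext Fm_two_mul
  have hse : Summable (fun k => Fm (2 * k)) := by
    rw [hFG]; exact summable_Gm.mul_left _
  have hso : Summable (fun k => Fm (2 * k + 1)) :=
    summable_Fm.comp_injective (fun a b h => by omega)
  have hmain := tsum_even_add_odd hse hso
  have hGe0 : (fun k => Gm (2 * k)) = fun _ => (0:ℝ) := by
    funext k; simp [Gm, Nat.odd_iff, Nat.mul_mod_right]
  have hGe : Summable (fun k => Gm (2 * k)) := by rw [hGe0]; exact summable_zero
  have hGo : Summable (fun k => Gm (2 * k + 1)) :=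
    summable_Gm.comp_injective (fun a b h => by omega)
  have hG := tsum_even_add_odd hGe hGo
  have h1 : ∑' k, Fm (2 * k) = -(1/4) * ∑' d, Gm d := by
    rw [hFG]; exact summable_Gm.tsum_mul_left _
  have h2 : ∑' k, Gm (2 * k) = 0 := by rw [hGe0, tsum_zero]
  have h3 : ∀ k, Gm (2 * k + 1) = Fm (2 * k + 1) := by
    intro k; rw [Gm, if_pos ⟨k, by omega⟩]
  rw [h2, zero_add] at hG
  simp_rw [h3] at hG
  rw [h1, hG, tsum_Fm] at hmain
  have hpi2 : (π:ℝ)^2 ≠ 0 := pow_ne_zero _ Real.pi_ne_zero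
  field_simp at hmain ⊢
  linarith



def OC (n d : ℕ) : ℕ := ((Finset.Icc 1 n).filter (fun x => Odd x ∧ d ∣ x)).card

def CC (n : ℕ) : ℕ := ((Finset.Icc 1 n ×ˢ Finset.Icc 1 n).filter
  (fun p : ℕ×ℕ => Odd p.1 ∧ Odd p.2 ∧ Nat.gcd p.1 p.2 = 1)).card

lemma OC_even {n d : ℕ} (hd : Even d) : OC n d = 0 := by
  rw [OC, Finset.card_eq_zero, Finset.filter_eq_empty_iff]
  rintro x - ⟨hodd, c, rfl⟩
  obtain ⟨e, rfl⟩ := hd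
  exact (Nat.not_odd_iff_even.mpr ⟨e * c, by ring⟩) hodd

lemma card_odd_Icc (m : ℕ) : ((Finset.Icc 1 m).filter (fun x => Odd x)).card = (m+1)/2 := by
  induction m with
  | zero => simp
  | succ m ih =>
    rw [← Finset.insert_Icc_right_eq_Icc_add_one (by omega), Finset.filter_insert]
    by_cases h : Odd (m+1)
    · rw [if_pos h, Finset.card_insert_of_notMem (by simp), ih]
      rw [Nat.odd_iff] at h; omega
    · rw [if_neg h, ih]
      rw [Nat.odd_iff] at h; omega

lemma OC_odd {d : ℕ} (hd : Odd d) (n : ℕ) : OC n d = (n / d + 1) / 2 := by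
  have hd0 : 0 < d := by rcases hd with ⟨k, rfl⟩; omega
  have himg : (Finset.Icc 1 n).filter (fun x => Odd x ∧ d ∣ x) =
      ((Finset.Icc 1 (n / d)).filter (fun x => Odd x)).image (· * d) := by
    ext x
    simp only [Finset.mem_filter, Finset.mem_Icc, Finset.mem_image]
    constructor
    · rintro ⟨⟨h1, h2⟩, hodd, c, rfl⟩
      refine ⟨c, ⟨⟨?_, ?_⟩, ?_⟩, mul_comm c d⟩
      · rcases Nat.eq_zero_or_pos c with rfl | h; · omega
        exact h
      · exact (Nat.le_div_iff_mul_le hd0).mpr (by rw [mul_comm]; exact h2)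
      · exact (Nat.odd_mul.mp hodd).2
    · rintro ⟨m, ⟨⟨h1, h2⟩, hodd⟩, rfl⟩
      exact ⟨⟨Nat.mul_pos h1 hd0, (Nat.le_div_iff_mul_le hd0).mp h2⟩,
        Nat.odd_mul.mpr ⟨hodd, hd⟩, ⟨m, mul_comm m d⟩⟩
  rw [OC, himg, Finset.card_image_of_injective _
    (fun a b h => Nat.eq_of_mul_eq_mul_right hd0 h), card_odd_Icc]

lemma CC_eq (n : ℕ) : (CC n : ℤ) = ∑ d ∈ Finset.Icc 1 n, μ d * (OC n d : ℤ)^2 := by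
  classical
  set A := (Finset.Icc 1 n ×ˢ Finset.Icc 1 n).filter
    (fun p : ℕ×ℕ => Odd p.1 ∧ Odd p.2) with hA
  have key : ∀ p : ℕ × ℕ, p ∈ A →
      (if Nat.gcd p.1 p.2 = 1 then (1:ℤ) else 0) =
        ∑ d ∈ Finset.Icc 1 n, (if d ∣ p.1 ∧ d ∣ p.2 then μ d else 0) := by
    intro p hp
    simp only [hA, Finset.mem_filter, Finset.mem_product, Finset.mem_Icc] at hp
    obtain ⟨⟨⟨h11, h12⟩, h21, h22⟩, -⟩ := hp
    have hg0 : Nat.gcd p.1 p.2 ≠ 0 := by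
      intro h; rw [Nat.gcd_eq_zero_iff] at h; omega
    have h1 : (if Nat.gcd p.1 p.2 = 1 then (1:ℤ) else 0)
        = (1 : ArithmeticFunction ℤ) (Nat.gcd p.1 p.2) := (one_apply).symm
    rw [h1, ← moebius_mul_coe_zeta, coe_mul_zeta_apply, ← Finset.sum_filter]
    apply Finset.sum_congr _ (fun _ _ => rfl)
    ext d
    simp only [Nat.mem_divisors, Finset.mem_filter, Finset.mem_Icc]
    constructor
    · rintro ⟨hd, -⟩
      have hd1 := hd.trans (Nat.gcd_dvd_left _ _)
      have hd2 := hd.trans (Nat.gcd_dvd_right _ _)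
      exact ⟨⟨Nat.pos_of_dvd_of_pos hd1 (by omega), (Nat.le_of_dvd (by omega) hd1).trans h12⟩, hd1, hd2⟩
    · rintro ⟨⟨hd1, hd2⟩, hdp1, hdp2⟩
      exact ⟨Nat.dvd_gcd hdp1 hdp2, hg0⟩
  have hsplit : (Finset.Icc 1 n ×ˢ Finset.Icc 1 n).filter
      (fun p : ℕ×ℕ => Odd p.1 ∧ Odd p.2 ∧ Nat.gcd p.1 p.2 = 1)
      = A.filter (fun p => Nat.gcd p.1 p.2 = 1) := by
    rw [hA, Finset.filter_filter]
    apply Finset.filter_congr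
    intro p _; tauto
  rw [CC, hsplit]
  have hcard : ((A.filter (fun p => Nat.gcd p.1 p.2 = 1)).card : ℤ)
      = ∑ p ∈ A, (if Nat.gcd p.1 p.2 = 1 then (1:ℤ) else 0) := by
    rw [Finset.card_filter]; push_cast; rfl
  rw [hcard, Finset.sum_congr rfl key, Finset.sum_comm]
  apply Finset.sum_congr rfl
  intro d _
  rw [← Finset.sum_filter, Finset.sum_const]
  have hfc : A.filter (fun p => d ∣ p.1 ∧ d ∣ p.2)
      = ((Finset.Icc 1 n).filter (fun x => Odd x ∧ d ∣ x)) ×ˢ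
        ((Finset.Icc 1 n).filter (fun x => Odd x ∧ d ∣ x)) := by
    rw [hA, Finset.filter_filter, ← Finset.filter_product]
    apply Finset.filter_congr
    intro p _; tauto
  rw [hfc, Finset.card_product]
  rw [← OC]
  push_cast
  ring

noncomputable def fD (n d : ℕ) : ℝ :=
  if d ∈ Finset.Icc 1 n then (μ d : ℝ) * ((OC n d : ℝ) / (n:ℝ))^2 else 0

lemma mu_norm_le (d : ℕ) : ‖(μ d : ℝ)‖ ≤ 1 := by
  rw [Real.norm_eq_abs, ← Int.cast_abs]
  exact_mod_cast abs_moebius_le_one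

lemma OC_le {n d : ℕ} (hd : 1 ≤ d) (hdn : d ≤ n) : (OC n d : ℝ) ≤ (n:ℝ) / d := by
  rcases Nat.even_or_odd d with h | h
  · rw [OC_even h]; simp; positivity
  · rw [OC_odd h]
    have h1 : ((n / d + 1) / 2 : ℕ) ≤ n / d := by
      have : 1 ≤ n / d := (Nat.one_le_div_iff (by omega)).mpr hdn
      omega
    calc ((( n / d + 1) / 2 : ℕ) : ℝ) ≤ ((n / d : ℕ) : ℝ) := by exact_mod_cast h1
      _ ≤ (n:ℝ) / d := Nat.cast_div_le

lemma fD_bound (n d : ℕ) : ‖fD n d‖ ≤ 1 / (d:ℝ)^2 := by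
  rw [fD]
  split
  · next h =>
    simp only [Finset.mem_Icc] at h
    have hd0 : (0:ℝ) < d := by exact_mod_cast h.1
    have hn0 : (0:ℝ) < n := by have := h.1.trans h.2; exact_mod_cast this
    rw [norm_mul]
    have h2 : ‖((OC n d : ℝ) / n)^2‖ ≤ 1/(d:ℝ)^2 := by
      rw [norm_pow, Real.norm_eq_abs, abs_of_nonneg (by positivity)]
      have : (OC n d : ℝ) / n ≤ 1 / d := by
        rw [div_le_div_iff₀ hn0 hd0, one_mul]
        exact (le_div_iff₀ hd0).mp (OC_le h.1 h.2)
      calc ((OC n d : ℝ)/n)^2 ≤ (1/(d:ℝ))^2 := by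
            apply pow_le_pow_left₀ (by positivity) this
        _ = 1/(d:ℝ)^2 := by norm_num [div_pow]
    calc ‖(μ d : ℝ)‖ * ‖((OC n d:ℝ)/n)^2‖ ≤ 1 * (1/(d:ℝ)^2) := by
          apply mul_le_mul (mu_norm_le d) h2 (norm_nonneg _) zero_le_one
      _ = 1/(d:ℝ)^2 := one_mul _
  · rw [norm_zero]; positivity

lemma fD_tendsto (d : ℕ) : Tendsto (fD · d) atTop (nhds ((1/4) * Gm d)) := by
  rcases Nat.even_or_odd d with h | h
  · have : (fD · d) = fun _ => (0:ℝ) := by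
      funext n
      rw [fD]
      split
      · rw [OC_even h]; norm_num
      · rfl
    rw [this, Gm, if_neg (Nat.not_odd_iff_even.mpr h)]
    simpa using tendsto_const_nhds
  · have hd0 : 0 < d := by rcases h with ⟨k, rfl⟩; omega
    have hd0R : (0:ℝ) < d := by exact_mod_cast hd0
    have hOC : Tendsto (fun n : ℕ => (OC n d : ℝ) / n) atTop (nhds (1/(2*(d:ℝ)))) := by
      have hlow : ∀ᶠ n : ℕ in atTop, 1/(2*(d:ℝ)) - 1/n ≤ (OC n d : ℝ) / n := by
        filter_upwards [eventually_ge_atTop 1] with n hn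
        have hn0 : (0:ℝ) < n := by exact_mod_cast hn
        have hq1 : d * (n / d) ≤ n := Nat.mul_div_le n d
        have hq2 : n < d * (n / d) + d := by
          have := Nat.mod_lt n hd0
          have := Nat.div_add_mod n d
          omega
        have hOCv : 2 * OC n d + 1 ≥ n / d + 1 := by rw [OC_odd h]; omega
        have hkey : n < d * (2 * OC n d + 1) := by
          calc n < d * (n / d) + d := hq2
            _ = d * (n / d + 1) := by ring
            _ ≤ d * (2 * OC n d + 1) := Nat.mul_le_mul_left d (by omega)
        have hkeyR : (n:ℝ) ≤ d * (2 * OC n d + 1) := by exact_mod_cast hkey.le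
        push_cast at hkeyR
        rw [sub_le_iff_le_add, ← add_div,
          div_le_div_iff₀ (by positivity : (0:ℝ) < 2*(d:ℝ)) hn0]
        nlinarith [(Nat.cast_nonneg (OC n d) : (0:ℝ) ≤ (OC n d : ℝ))]
      have hup : ∀ᶠ n : ℕ in atTop, (OC n d : ℝ) / n ≤ 1/(2*(d:ℝ)) + 1/n := by
        filter_upwards [eventually_ge_atTop 1] with n hn
        have hn0 : (0:ℝ) < n := by exact_mod_cast hn
        have hq1 : d * (n / d) ≤ n := Nat.mul_div_le n d
        have hkey : d * (2 * OC n d) ≤ n + d := by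
          calc d * (2 * OC n d) ≤ d * (n / d + 1) := Nat.mul_le_mul_left d (by rw [OC_odd h]; omega)
            _ = d * (n / d) + d := by ring
            _ ≤ n + d := by omega
        have hkeyR : (d:ℝ) * (2 * OC n d) ≤ n + d := by exact_mod_cast hkey
        rw [← sub_le_iff_le_add, div_sub_div_same,
          div_le_div_iff₀ hn0 (by positivity : (0:ℝ) < 2*(d:ℝ))]
        nlinarith
      have h1n : Tendsto (fun n : ℕ => 1/(n:ℝ)) atTop (nhds 0) := by
        exact tendsto_one_div_atTop_nhds_zero_nat
      refine tendsto_of_tendsto_of_tendsto_of_le_of_le' ?_ ?_ hlow hup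
      · simpa using tendsto_const_nhds.sub h1n
      · simpa using tendsto_const_nhds.add h1n
    have hmain : Tendsto (fun n : ℕ => (μ d : ℝ) * ((OC n d : ℝ)/n)^2) atTop
        (nhds ((μ d : ℝ) * (1/(2*(d:ℝ)))^2)) := (hOC.pow 2).const_mul _
    have heq : (fD · d) =ᶠ[atTop] fun n => (μ d : ℝ) * ((OC n d : ℝ)/n)^2 := by
      filter_upwards [eventually_ge_atTop d] with n hn
      rw [fD, if_pos (Finset.mem_Icc.mpr ⟨hd0, hn⟩)]
    rw [show (1/4) * Gm d = (μ d : ℝ) * (1/(2*(d:ℝ)))^2 by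
      rw [Gm, if_pos h, Fm]; ring]
    exact hmain.congr' heq.symm

lemma tendsto_CC : Tendsto (fun n : ℕ => (CC n : ℝ) / (n:ℝ)^2) atTop (nhds (2/π^2)) := by
  have hsum : Summable (fun d : ℕ => 1/(d:ℝ)^2) :=
    (Real.summable_one_div_nat_pow (p := 2)).mpr one_lt_two
  have h := tendsto_tsum_of_dominated_convergence (f := fD) (g := fun d => (1/4) * Gm d)
    (bound := fun d => 1/(d:ℝ)^2) hsum fD_tendsto
    (Eventually.of_forall (fun n d => fD_bound n d))
  have htsum_g : ∑' d, (1/4) * Gm d = 2/π^2 := by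
    rw [summable_Gm.tsum_mul_left, tsum_Gm]
    ring
  rw [htsum_g] at h
  apply h.congr'
  filter_upwards [eventually_ge_atTop 1] with n hn
  have hn0 : (0:ℝ) < n := by exact_mod_cast hn
  have : ∑' d, fD n d = ∑ d ∈ Finset.Icc 1 n, (μ d : ℝ) * ((OC n d : ℝ)/n)^2 := by
    rw [tsum_eq_sum (s := Finset.Icc 1 n)]
    · exact Finset.sum_congr rfl (fun d hd => by rw [fD, if_pos hd])
    · intro d hd; rw [fD, if_neg hd]
  rw [this]
  have hcast : ((CC n : ℝ)) = ∑ d ∈ Finset.Icc 1 n, (μ d : ℝ) * ((OC n d : ℝ))^2 := by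
    exact_mod_cast congrArg (Int.cast : ℤ → ℝ) (CC_eq n)
  rw [eq_div_iff (by positivity : ((n:ℝ)^2) ≠ 0), hcast, Finset.sum_mul]
  apply Finset.sum_congr rfl
  intro d hd
  have hne : (n:ℝ) ≠ 0 := by positivity
  field_simp

lemma odd_odd {a b : ℕ} (hg : Nat.gcd a b = 1) (he : Even (a+b)) : Odd a ∧ Odd b := by
  rcases Nat.even_or_odd a with ha | ha
  · have hb : Even b := (Nat.even_add.mp he).mp ha
    exfalso
    have h2 : 2 ∣ Nat.gcd a b := Nat.dvd_gcd ha.two_dvd hb.two_dvd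
    rw [hg] at h2; norm_num at h2
  · exact ⟨ha, Nat.not_even_iff_odd.mp (fun hb => (Nat.not_even_iff_odd.mpr ha) ((Nat.even_add.mp he).mpr hb))⟩

noncomputable def phi : (ℕ × ℕ) × (Bool × Bool) → ℤ × ℤ := fun q =>
  ((if q.2.1 then (q.1.1:ℤ) else -(q.1.1:ℤ)), (if q.2.2 then (q.1.2:ℤ) else -(q.1.2:ℤ)))

lemma card_eq (n : ℕ) :
    Nat.card {p : ℤ × ℤ // |p.1| ≤ (n : ℤ) ∧ |p.2| ≤ (n : ℤ) ∧
      Int.gcd p.1 p.2 = 1 ∧ Even (|p.1| + |p.2|)} = 4 * CC n := by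
  classical
  set Cfin := (Finset.Icc 1 n ×ˢ Finset.Icc 1 n).filter
    (fun p : ℕ×ℕ => Odd p.1 ∧ Odd p.2 ∧ Nat.gcd p.1 p.2 = 1) with hCfin
  set Fz : Finset (ℤ × ℤ) := (Cfin ×ˢ (Finset.univ : Finset (Bool × Bool))).image phi with hFz
  have hset : {p : ℤ × ℤ | |p.1| ≤ (n : ℤ) ∧ |p.2| ≤ (n : ℤ) ∧
      Int.gcd p.1 p.2 = 1 ∧ Even (|p.1| + |p.2|)} = ↑Fz := by
    ext p
    simp only [Set.mem_setOf_eq, hFz, Finset.coe_image, Set.mem_image, Finset.mem_coe,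
      Finset.mem_product, Finset.mem_univ, and_true, hCfin, Finset.mem_filter, Finset.mem_Icc]
    constructor
    · rintro ⟨hx, hy, hg, he⟩
      set x := p.1 with hxdef
      set y := p.2 with hydef
      set a := x.natAbs with ha
      set b := y.natAbs with hb
      have hxa : |x| = (a:ℤ) := Int.abs_eq_natAbs x
      have hyb : |y| = (b:ℤ) := Int.abs_eq_natAbs y
      have hgn : Nat.gcd a b = 1 := hg
      have hePar : Even (a + b) := by
        rw [hxa, hyb] at he
        exact_mod_cast he
      obtain ⟨hoa, hob⟩ := odd_odd hgn hePar
      have ha1 : 1 ≤ a := by rcases hoa with ⟨k, hk⟩; omega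
      have hb1 : 1 ≤ b := by rcases hob with ⟨k, hk⟩; omega
      have han : a ≤ n := by rw [hxa] at hx; exact_mod_cast hx
      have hbn : b ≤ n := by rw [hyb] at hy; exact_mod_cast hy
      refine ⟨((a, b), (decide (0 ≤ x), decide (0 ≤ y))), ⟨⟨⟨ha1, han⟩, hb1, hbn⟩, hoa, hob, hgn⟩, ?_⟩
      rw [phi]
      simp only
      have e1 : (if decide (0 ≤ x) = true then (a:ℤ) else -(a:ℤ)) = x := by
        by_cases h0 : 0 ≤ x
        · rw [if_pos (by simpa using h0)]; omega
        · rw [if_neg (by simpa using h0)]; omega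
      have e2 : (if decide (0 ≤ y) = true then (b:ℤ) else -(b:ℤ)) = y := by
        by_cases h0 : 0 ≤ y
        · rw [if_pos (by simpa using h0)]; omega
        · rw [if_neg (by simpa using h0)]; omega
      rw [e1, e2]
    · rintro ⟨⟨⟨a, b⟩, ⟨s, t⟩⟩, ⟨⟨⟨ha1, han⟩, hb1, hbn⟩, hoa, hob, hgn⟩, hq⟩
      simp only at ha1 han hb1 hbn hoa hob hgn
      rw [← hq, phi]
      simp only
      have h1 : |if s then (a:ℤ) else -(a:ℤ)| = (a:ℤ) := by
        split <;> simp [abs_of_nonneg, Int.natCast_nonneg]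
      have h2 : |if t then (b:ℤ) else -(b:ℤ)| = (b:ℤ) := by
        split <;> simp [abs_of_nonneg, Int.natCast_nonneg]
      refine ⟨by rw [h1]; exact_mod_cast han, by rw [h2]; exact_mod_cast hbn, ?_, ?_⟩
      · have hna : (if s then (a:ℤ) else -(a:ℤ)).natAbs = a := by split <;> simp
        have hnb : (if t then (b:ℤ) else -(b:ℤ)).natAbs = b := by split <;> simp
        rw [Int.gcd, hna, hnb]; exact hgn
      · rw [h1, h2]
        have : Even (a + b) := (Nat.even_add).mpr (by
          constructor
          · intro h; exact absurd h (Nat.not_even_iff_odd.mpr hoa)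
          · intro h; exact absurd h (Nat.not_even_iff_odd.mpr hob))
        exact_mod_cast this
  have h1 : Nat.card {p : ℤ × ℤ // |p.1| ≤ (n : ℤ) ∧ |p.2| ≤ (n : ℤ) ∧
      Int.gcd p.1 p.2 = 1 ∧ Even (|p.1| + |p.2|)} = Fz.card := by
    have h2 : ({p : ℤ × ℤ | |p.1| ≤ (n : ℤ) ∧ |p.2| ≤ (n : ℤ) ∧
        Int.gcd p.1 p.2 = 1 ∧ Even (|p.1| + |p.2|)}).ncard = Fz.card := by
      rw [hset, Set.ncard_coe_finset]
    exact (Nat.card_coe_set_eq _).trans h2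
  rw [h1, hFz]
  rw [Finset.card_image_of_injOn]
  · rw [Finset.card_product, Finset.card_univ]
    simp [CC, hCfin, mul_comm]
  · rintro ⟨⟨a, b⟩, ⟨s, t⟩⟩ hmem ⟨⟨a', b'⟩, ⟨s', t'⟩⟩ hmem' heq
    simp only [Finset.mem_coe, Finset.mem_product, hCfin, Finset.mem_filter,
      Finset.mem_Icc] at hmem hmem'
    obtain ⟨⟨⟨⟨ha1, -⟩, hb1, -⟩, -⟩, -⟩ := hmem
    obtain ⟨⟨⟨⟨ha1', -⟩, hb1', -⟩, -⟩, -⟩ := hmem'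
    rw [phi, phi, Prod.mk.injEq] at heq
    simp only at heq
    obtain ⟨h1, h2⟩ := heq
    have hA : a = a' ∧ s = s' := by
      rcases s with _|_ <;> rcases s' with _|_ <;> simp_all <;> omega
    have hB : b = b' ∧ t = t' := by
      rcases t with _|_ <;> rcases t' with _|_ <;> simp_all <;> omega
    simp [hA.1, hA.2, hB.1, hB.2]

theorem density_even_visible_Z2 :
    Tendsto (fun n : ℕ =>
        (Nat.card {p : ℤ × ℤ // |p.1| ≤ (n : ℤ) ∧ |p.2| ≤ (n : ℤ) ∧
            Int.gcd p.1 p.2 = 1 ∧ Even (|p.1| + |p.2|)} : ℝ) / ((2 * (n : ℝ) + 1) ^ 2))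
      atTop (nhds (2 / Real.pi ^ 2)) := by
  have hb : Tendsto (fun n : ℕ => (n:ℝ)/(2*(n:ℝ)+1)) atTop (nhds (1/2)) := by
    have h0 : Tendsto (fun n : ℕ => 1/(n:ℝ)) atTop (nhds 0) := by
      exact tendsto_one_div_atTop_nhds_zero_nat
    have hden : Tendsto (fun n : ℕ => 2 + 1/(n:ℝ)) atTop (nhds 2) := by
      simpa using (tendsto_const_nhds (x := (2:ℝ))).add h0
    have hmain := (tendsto_const_nhds (x := (1:ℝ))).div hden (two_ne_zero)
    apply hmain.congr'
    filter_upwards [eventually_ge_atTop 1] with n hn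
    have hn0 : (0:ℝ) < n := by exact_mod_cast hn
    simp only [Pi.div_apply]
    field_simp
  have hfrac : Tendsto (fun n : ℕ => ((n:ℝ)/(2*(n:ℝ)+1))^2) atTop (nhds ((1/2)^2)) := hb.pow 2
  have h := (tendsto_CC.mul hfrac).const_mul (4:ℝ)
  have hval : (4:ℝ) * (2/π^2 * (1/2)^2) = 2/π^2 := by ring
  rw [hval] at h
  apply h.congr'
  filter_upwards [eventually_ge_atTop 1] with n hn
  have hn0 : (0:ℝ) < n := by exact_mod_cast hn
  have h2n : (0:ℝ) < 2*(n:ℝ)+1 := by positivity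
  have hcard : (Nat.card {p : ℤ × ℤ // |p.1| ≤ (n : ℤ) ∧ |p.2| ≤ (n : ℤ) ∧
      Int.gcd p.1 p.2 = 1 ∧ Even (|p.1| + |p.2|)} : ℝ) = 4 * CC n := by
    rw [card_eq]; push_cast; ring
  rw [hcard]
  field_simp
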